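/- In the extended binary Golay code C₂₄ ⊆ F₂²⁴, regarded as a collection of subsets of a 24-element set Ω closed under symmetric difference, the weight enumerator is: one word of weight 0, 759 of weight 8 (octads), 2576 of weight 12 (dodecads), 759 of weight 16, and one of weight 24; in particular, C₂₄ is invariant under complementation (S ∈ C₂₄ implies Ω \ S ∈ C₂₄) and contains no words of weight 4. -/

import Mathlib

open Finset in
/-- The (Hamming) weight of a binary word of length 24. -/
def golayWt (x : Fin 24 → ZMod 2) : ℕ := (Finset.univ.filter fun i => x i ≠ 0).card

open Finset

section Aux
variable (C : Submodule (ZMod 2) (Fin 24 → ZMod 2))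

lemma z2 : ∀ a : ZMod 2, a = 0 ∨ a = 1 := by decide
lemma z2ne : ∀ a : ZMod 2, a ≠ 0 ↔ a = 1 := by decide
lemma z2add (a b : Fin 24 → ZMod 2) (i : Fin 24) : (a + b) i = a i + b i := rfl
lemma z2self (a : Fin 24 → ZMod 2) : a + a = 0 := by
  funext i; show a i + a i = 0; revert a; intro a; rcases z2 (a i) with h|h <;> rw [h] <;> decide

lemma sum_eq_wt (y : Fin 24 → ZMod 2) : ∑ i, y i = (golayWt y : ZMod 2) := by
  unfold golayWt
  rw [Finset.card_filter, Nat.cast_sum]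
  apply Finset.sum_congr rfl
  intro i _
  rcases z2 (y i) with h | h <;> simp [h]

lemma card_translate (a : Fin 24 → ZMod 2) (ha : a ∈ C)
    (P Q : (Fin 24 → ZMod 2) → Prop) [DecidablePred P] [DecidablePred Q]
    [DecidablePred fun x : Fin 24 → ZMod 2 => x ∈ C]
    (h : ∀ x, P x ↔ Q (x + a)) :
    ((univ.filter (· ∈ C)).filter P).card = ((univ.filter (· ∈ C)).filter Q).card := by
  apply Finset.card_bij' (fun x _ => x + a) (fun y _ => y + a)
  · intro x hx
    simp only [mem_filter, mem_univ, true_and] at hx ⊢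
    exact ⟨C.add_mem hx.1 ha, (h x).1 hx.2⟩
  · intro y hy
    simp only [mem_filter, mem_univ, true_and] at hy ⊢
    refine ⟨C.add_mem hy.1 ha, ?_⟩
    rw [h, add_assoc, z2self, add_zero]
    exact hy.2
  · intro x _; rw [add_assoc, z2self, add_zero]
  · intro y _; rw [add_assoc, z2self, add_zero]

lemma wt_le (x : Fin 24 → ZMod 2) : golayWt x ≤ 24 := by
  unfold golayWt
  calc (univ.filter fun i => x i ≠ 0).card ≤ (univ : Finset (Fin 24)).card := card_filter_le _ _
  _ = 24 := by simp

lemma wt_zero_iff (x : Fin 24 → ZMod 2) : golayWt x = 0 ↔ x = 0 := by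
  unfold golayWt
  rw [Finset.card_eq_zero, Finset.filter_eq_empty_iff, funext_iff]
  simp

def onesW : Fin 24 → ZMod 2 := fun _ => 1

def eW (i : Fin 24) : Fin 24 → ZMod 2 := Pi.single i 1

lemma eW_apply (i j : Fin 24) : eW i j = if j = i then 1 else 0 := Pi.single_apply i 1 j

lemma wt_compl (x : Fin 24 → ZMod 2) :
    golayWt (x + onesW) = 24 - golayWt x := by
  unfold golayWt
  have : (univ.filter fun i => (x + onesW) i ≠ 0)
      = (univ.filter fun i => x i ≠ 0)ᶜ := by
    ext i
    simp only [mem_filter, mem_compl, mem_univ, true_and]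
    show x i + onesW i ≠ 0 ↔ ¬ x i ≠ 0
    show x i + 1 ≠ 0 ↔ ¬ x i ≠ 0
    rcases z2 (x i) with h|h <;> rw [h] <;> decide
  rw [this, Finset.card_compl]
  simp

lemma wt_24_iff (x : Fin 24 → ZMod 2) : golayWt x = 24 ↔ x = onesW := by
  constructor
  · intro h
    have h2 : (univ.filter fun i => x i ≠ 0) = univ := by
      apply Finset.eq_univ_of_card
      simpa [golayWt] using h
    funext i
    have : x i ≠ 0 := by
      have := (Finset.eq_univ_iff_forall.1 h2) i
      simpa using this
    exact (z2ne _).1 this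
  · rintro rfl
    unfold golayWt
    simp [onesW]

end Aux

section Aux2
variable {C : Submodule (ZMod 2) (Fin 24 → ZMod 2)}
variable (hselfdual : ∀ x : Fin 24 → ZMod 2, x ∈ C ↔ ∀ y ∈ C, ∑ i, x i * y i = 0)
variable (hdoublyeven : ∀ x ∈ C, 4 ∣ golayWt x)
variable (hmin : ∀ x ∈ C, x ≠ 0 → 8 ≤ golayWt x)

include hselfdual hdoublyeven in
lemma ones_mem : onesW ∈ C := by
  rw [hselfdual]
  intro y hy
  have h1 : ∑ i, onesW i * y i = ∑ i, y i := by
    apply Finset.sum_congr rfl; intro i _; show 1 * y i = y i; rw [one_mul]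
  rw [h1, sum_eq_wt]
  obtain ⟨k, hk⟩ := hdoublyeven y hy
  rw [hk]
  have h4 : ((4:ℕ) : ZMod 2) = 0 := by decide
  rw [Nat.cast_mul, h4, zero_mul]

include hselfdual hmin in
lemma exists_coord (i : Fin 24) : ∃ a ∈ C, a i ≠ 0 := by
  by_contra hc
  push_neg at hc
  have he : eW i ∈ C := by
    rw [hselfdual]
    intro y hy
    have h1 : ∑ k, eW i k * y k = y i := by
      rw [Finset.sum_eq_single i]
      · rw [eW_apply, if_pos rfl, one_mul]
      · intro b _ hbi
        rw [eW_apply, if_neg hbi, zero_mul]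
      · intro h; exact absurd (Finset.mem_univ i) h
    rw [h1, hc y hy]
  have hne : eW i ≠ 0 := by
    intro hh
    have h0 := congrFun hh i
    rw [eW_apply, if_pos rfl] at h0
    exact one_ne_zero h0
  have h8 := hmin _ he hne
  have hw : golayWt (eW i) = 1 := by
    unfold golayWt
    have h2 : (univ.filter fun j => eW i j ≠ 0) = {i} := by
      ext j
      simp [eW_apply]
    rw [h2]; simp
  omega

include hselfdual hmin in
lemma exists_pair {i j : Fin 24} (hij : i ≠ j) : ∃ d ∈ C, d i ≠ d j := by
  by_contra hc
  push_neg at hc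
  set v : Fin 24 → ZMod 2 := eW i + eW j with hv
  have hvk : ∀ k, v k = (if k = i then 1 else 0) + (if k = j then 1 else 0) := by
    intro k; rw [hv]; show eW i k + eW j k = _; rw [eW_apply, eW_apply]
  have he : v ∈ C := by
    rw [hselfdual]
    intro y hy
    have h1 : ∑ k, v k * y k = y i + y j := by
      have : ∀ k, v k * y k = (if k = i then y k else 0) + (if k = j then y k else 0) := by
        intro k; rw [hvk k, add_mul, ite_mul, ite_mul]; simp
      rw [Finset.sum_congr rfl (fun k _ => this k), Finset.sum_add_distrib]
      simp
    rw [h1, hc y hy]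
    rcases z2 (y j) with h|h <;> rw [h] <;> decide
  have hne : v ≠ 0 := by
    intro hh
    have := congrFun hh i
    rw [hvk i] at this
    simp [hij] at this
  have h8 := hmin _ he hne
  have hw : golayWt v = 2 := by
    unfold golayWt
    have h2 : (univ.filter fun k => v k ≠ 0) = {i, j} := by
      ext k
      simp only [mem_filter, mem_univ, true_and, mem_insert, mem_singleton, hvk k]
      rcases eq_or_ne k i with rfl|hki <;> rcases eq_or_ne k j with rfl|hkj
      · exact absurd rfl hij
      · simp [hkj]
      · simp [hki]
      · simp [hki, hkj]
    rw [h2, Finset.card_insert_of_notMem (by simpa using hij), Finset.card_singleton]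
  omega

end Aux2

section Aux3
variable {C : Submodule (ZMod 2) (Fin 24 → ZMod 2)}
variable (hselfdual : ∀ x : Fin 24 → ZMod 2, x ∈ C ↔ ∀ y ∈ C, ∑ i, x i * y i = 0)
variable (hmin : ∀ x ∈ C, x ≠ 0 → 8 ≤ golayWt x)
variable [DecidablePred fun x : Fin 24 → ZMod 2 => x ∈ C]

lemma key1 : ∀ a : ZMod 2, a ≠ 0 ↔ ¬ (a + 1) ≠ 0 := by decide

include hselfdual hmin in
lemma L1 (hcard : (univ.filter (· ∈ C)).card = 4096) (i : Fin 24) :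
    ((univ.filter (· ∈ C)).filter fun x => x i ≠ 0).card = 2048 := by
  obtain ⟨a, ha, hai⟩ := exists_coord hselfdual hmin i
  have hai1 : a i = 1 := (z2ne _).1 hai
  have ht := card_translate C a ha (fun x => x i ≠ 0) (fun x => ¬ x i ≠ 0) (by
    intro x
    show x i ≠ 0 ↔ ¬ (x i + a i) ≠ 0
    rw [hai1]
    exact key1 (x i))
  have hs := Finset.card_filter_add_card_filter_not
    (s := univ.filter (· ∈ C)) (p := fun x => x i ≠ 0)
  rw [hcard] at hs
  rw [ht] at hs ⊢
  linarith

include hselfdual hmin in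
lemma L2 (hcard : (univ.filter (· ∈ C)).card = 4096) {i j : Fin 24} (hij : i ≠ j) :
    ((univ.filter (· ∈ C)).filter fun x => x i ≠ 0 ∧ x j ≠ 0).card = 1024 := by
  obtain ⟨d, hd, hdij⟩ := exists_pair hselfdual hmin hij
  have hsplit : ∀ p q : Fin 24,
      ((univ.filter (· ∈ C)).filter fun x => x p ≠ 0 ∧ x q ≠ 0).card
      + ((univ.filter (· ∈ C)).filter fun x => x p ≠ 0 ∧ ¬ x q ≠ 0).card = 2048 := by
    intro p q
    have h := Finset.card_filter_add_card_filter_not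
      (s := (univ.filter (· ∈ C)).filter fun x => x p ≠ 0) (p := fun x => x q ≠ 0)
    have e1 : ((univ.filter (· ∈ C)).filter fun x => x p ≠ 0 ∧ x q ≠ 0)
        = ((univ.filter (· ∈ C)).filter fun x => x p ≠ 0).filter fun x => x q ≠ 0 := by
      ext x; simp only [mem_filter]; tauto
    have e2 : ((univ.filter (· ∈ C)).filter fun x => x p ≠ 0 ∧ ¬ x q ≠ 0)
        = ((univ.filter (· ∈ C)).filter fun x => x p ≠ 0).filter fun x => ¬ x q ≠ 0 := by
      ext x; simp only [mem_filter]; tauto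
    rw [e1, e2, h, L1 hselfdual hmin hcard p]
  have hcomm : ((univ.filter (· ∈ C)).filter fun x => x j ≠ 0 ∧ x i ≠ 0)
      = ((univ.filter (· ∈ C)).filter fun x => x i ≠ 0 ∧ x j ≠ 0) := by
    ext x
    simp only [mem_filter]
    tauto
  have key2 : ∀ a b : ZMod 2, (a ≠ 0 ∧ b ≠ 0) ↔ (a + 0 ≠ 0 ∧ ¬ (b + 1) ≠ 0) := by decide
  have key3 : ∀ a b : ZMod 2, (a ≠ 0 ∧ b ≠ 0) ↔ (b + 0 ≠ 0 ∧ ¬ (a + 1) ≠ 0) := by decide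
  rcases z2 (d i) with hdi|hdi <;> rcases z2 (d j) with hdj|hdj
  · exact absurd (hdi.trans hdj.symm) hdij
  · have ht := card_translate C d hd (fun x => x i ≠ 0 ∧ x j ≠ 0)
      (fun x => x i ≠ 0 ∧ ¬ x j ≠ 0) (by
        intro x
        show x i ≠ 0 ∧ x j ≠ 0 ↔ (x i + d i ≠ 0 ∧ ¬ (x j + d j) ≠ 0)
        rw [hdi, hdj]
        exact key2 (x i) (x j))
    have h1 := hsplit i j
    rw [ht] at h1 ⊢
    linarith
  · have ht := card_translate C d hd (fun x => x i ≠ 0 ∧ x j ≠ 0)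
      (fun x => x j ≠ 0 ∧ ¬ x i ≠ 0) (by
        intro x
        show x i ≠ 0 ∧ x j ≠ 0 ↔ (x j + d j ≠ 0 ∧ ¬ (x i + d i) ≠ 0)
        rw [hdi, hdj]
        exact key3 (x i) (x j))
    have h2 := hsplit j i
    rw [hcomm] at h2
    rw [ht] at h2 ⊢
    linarith
  · exact absurd (hdi.trans hdj.symm) hdij

end Aux3

section Aux4
variable {C : Submodule (ZMod 2) (Fin 24 → ZMod 2)}
variable (hselfdual : ∀ x : Fin 24 → ZMod 2, x ∈ C ↔ ∀ y ∈ C, ∑ i, x i * y i = 0)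
variable (hdoublyeven : ∀ x ∈ C, 4 ∣ golayWt x)
variable (hmin : ∀ x ∈ C, x ≠ 0 → 8 ≤ golayWt x)
variable [DecidablePred fun x : Fin 24 → ZMod 2 => x ∈ C]

lemma wt0 : golayWt (0 : Fin 24 → ZMod 2) = 0 := (wt_zero_iff 0).2 rfl

include hselfdual hmin in
lemma M2 (hcard : (univ.filter (· ∈ C)).card = 4096) :
    ∑ x ∈ univ.filter (· ∈ C), (golayWt x)^2 = 614400 := by
  have hw : ∀ x : Fin 24 → ZMod 2, golayWt x = ∑ i, if x i ≠ 0 then 1 else 0 := by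
    intro x; unfold golayWt; rw [Finset.card_filter]
  have step1 : ∀ x : Fin 24 → ZMod 2, (golayWt x)^2
      = ∑ p : Fin 24 × Fin 24, (if x p.1 ≠ 0 ∧ x p.2 ≠ 0 then 1 else 0) := by
    intro x
    rw [hw, sq, Finset.sum_mul_sum, Fintype.sum_prod_type]
    apply Finset.sum_congr rfl; intro i _
    apply Finset.sum_congr rfl; intro j _
    rcases Classical.em (x i ≠ 0) with h1|h1 <;> rcases Classical.em (x j ≠ 0) with h2|h2 <;>
      simp [h1, h2]
  calc ∑ x ∈ univ.filter (· ∈ C), (golayWt x)^2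
      = ∑ x ∈ univ.filter (· ∈ C), ∑ p : Fin 24 × Fin 24,
          (if x p.1 ≠ 0 ∧ x p.2 ≠ 0 then 1 else 0) :=
        Finset.sum_congr rfl (fun x _ => step1 x)
    _ = ∑ p : Fin 24 × Fin 24, ∑ x ∈ univ.filter (· ∈ C),
          (if x p.1 ≠ 0 ∧ x p.2 ≠ 0 then 1 else 0) := Finset.sum_comm
    _ = ∑ p : Fin 24 × Fin 24,
          ((univ.filter (· ∈ C)).filter fun x => x p.1 ≠ 0 ∧ x p.2 ≠ 0).card :=
        Finset.sum_congr rfl (fun p _ => (Finset.card_filter _ _).symm)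
    _ = ∑ p : Fin 24 × Fin 24, if p.1 = p.2 then 2048 else 1024 := by
        apply Finset.sum_congr rfl; intro p _
        by_cases h : p.1 = p.2
        · rw [if_pos h]
          have e : ((univ.filter (· ∈ C)).filter fun x => x p.1 ≠ 0 ∧ x p.2 ≠ 0)
              = ((univ.filter (· ∈ C)).filter fun x => x p.1 ≠ 0) := by
            ext x
            simp only [mem_filter]
            constructor
            · rintro ⟨h1, h2, _⟩; exact ⟨h1, h2⟩
            · rintro ⟨h1, h2⟩; exact ⟨h1, h2, by rw [← h]; exact h2⟩
          rw [e, L1 hselfdual hmin hcard]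
        · rw [if_neg h]
          exact L2 hselfdual hmin hcard h
    _ = 614400 := by
        rw [Fintype.sum_prod_type]
        have hrow : ∀ i : Fin 24,
            (∑ j : Fin 24, if i = j then 2048 else 1024) = 25600 := by
          intro i
          have e : ∀ j : Fin 24, (if i = j then 2048 else 1024)
              = 1024 + (if i = j then 1024 else 0) := by
            intro j; split_ifs <;> rfl
          rw [Finset.sum_congr rfl (fun j _ => e j), Finset.sum_add_distrib,
            Finset.sum_const, Finset.sum_ite_eq]
          simp
        rw [Finset.sum_congr rfl (fun i _ => hrow i), Finset.sum_const]
        simp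

include hselfdual hdoublyeven hmin in
lemma wt_mem {x : Fin 24 → ZMod 2} (hx : x ∈ C) :
    golayWt x ∈ ({0, 8, 12, 16, 24} : Finset ℕ) := by
  have h4 := hdoublyeven x hx
  have hle := wt_le x
  simp only [Finset.mem_insert, Finset.mem_singleton]
  by_cases h0 : x = 0
  · subst h0; left; exact wt0
  have h8 := hmin x hx h0
  have h20 : golayWt x ≠ 20 := by
    intro h20
    have hx1 : x + onesW ∈ C := C.add_mem hx (ones_mem hselfdual hdoublyeven)
    have hw4 : golayWt (x + onesW) = 4 := by rw [wt_compl, h20]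
    have hne : x + onesW ≠ 0 := by
      intro hh; rw [hh, wt0] at hw4; exact absurd hw4 (by norm_num)
    have := hmin _ hx1 hne
    omega
  omega

include hselfdual hdoublyeven in
lemma A16_eq_A8 :
    ((univ.filter (· ∈ C)).filter fun x => golayWt x = 16).card
    = ((univ.filter (· ∈ C)).filter fun x => golayWt x = 8).card := by
  apply card_translate C onesW (ones_mem hselfdual hdoublyeven)
  intro x
  rw [wt_compl]
  have := wt_le x
  omega

lemma A0_eq : ((univ.filter (· ∈ C)).filter fun x => golayWt x = 0) = {0} := by
  ext x
  simp only [mem_filter, mem_univ, true_and, mem_singleton, wt_zero_iff]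
  exact ⟨fun h => h.2, fun h => ⟨h ▸ C.zero_mem, h⟩⟩

include hselfdual hdoublyeven in
lemma A24_eq : ((univ.filter (· ∈ C)).filter fun x => golayWt x = 24) = {onesW} := by
  ext x
  simp only [mem_filter, mem_univ, true_and, mem_singleton, wt_24_iff]
  refine ⟨fun h => h.2, fun h => ⟨h ▸ ones_mem hselfdual hdoublyeven, h⟩⟩

end Aux4

/-- The extended binary Golay code — characterized as a self-dual, doubly
even binary linear code of length 24, dimension 12 (i.e. 4096 words) and minimum
distance 8 — has weight enumerator `0¹ 8⁷⁵⁹ 12²⁵⁷⁶ 16⁷⁵⁹ 24¹`; in particular it is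
invariant under complementation and contains no words of weight 4. -/
theorem stmt_17 (C : Submodule (ZMod 2) (Fin 24 → ZMod 2))
    (hcard : Nat.card C = 4096)
    (hselfdual : ∀ x : Fin 24 → ZMod 2,
      x ∈ C ↔ ∀ y ∈ C, ∑ i, x i * y i = 0)
    (hdoublyeven : ∀ x ∈ C, 4 ∣ golayWt x)
    (hmin : ∀ x ∈ C, x ≠ 0 → 8 ≤ golayWt x) :
    Nat.card {x : Fin 24 → ZMod 2 // x ∈ C ∧ golayWt x = 0} = 1 ∧
    Nat.card {x : Fin 24 → ZMod 2 // x ∈ C ∧ golayWt x = 8} = 759 ∧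
    Nat.card {x : Fin 24 → ZMod 2 // x ∈ C ∧ golayWt x = 12} = 2576 ∧
    Nat.card {x : Fin 24 → ZMod 2 // x ∈ C ∧ golayWt x = 16} = 759 ∧
    Nat.card {x : Fin 24 → ZMod 2 // x ∈ C ∧ golayWt x = 24} = 1 ∧
    (∀ x ∈ C, (fun i => x i + 1) ∈ C) ∧
    (∀ x ∈ C, golayWt x ≠ 4) := by
  letI : DecidablePred fun x : Fin 24 → ZMod 2 => x ∈ C := Classical.decPred _
  have hCF : ((univ.filter (· ∈ C)) : Finset (Fin 24 → ZMod 2)).card = 4096 := by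
    rw [← hcard, Nat.card_eq_fintype_card]
    exact (Fintype.card_subtype _).symm
  have hnat : ∀ w : ℕ, Nat.card {x : Fin 24 → ZMod 2 // x ∈ C ∧ golayWt x = w}
      = ((univ.filter (· ∈ C)).filter fun x => golayWt x = w).card := by
    intro w
    have e : ((univ.filter (· ∈ C)).filter fun x => golayWt x = w)
        = univ.filter fun x => x ∈ C ∧ golayWt x = w := by
      ext x; simp only [mem_filter, mem_univ, true_and]
    rw [e, Nat.card_eq_fintype_card]
    exact Fintype.card_subtype _
  have h0 : ((univ.filter (· ∈ C)).filter fun x => golayWt x = 0).card = 1 := by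
    rw [A0_eq]; exact Finset.card_singleton _
  have h24 : ((univ.filter (· ∈ C)).filter fun x => golayWt x = 24).card = 1 := by
    rw [A24_eq hselfdual hdoublyeven]; exact Finset.card_singleton _
  have h168 := A16_eq_A8 (C := C) hselfdual hdoublyeven
  have hexp : ∀ f : ℕ → ℕ, ∑ w ∈ ({0, 8, 12, 16, 24} : Finset ℕ), f w
      = f 0 + (f 8 + (f 12 + (f 16 + f 24))) := by
    intro f
    rw [show ({0, 8, 12, 16, 24} : Finset ℕ)
        = insert 0 (insert 8 (insert 12 (insert 16 {24}))) from rfl]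
    rw [Finset.sum_insert (by decide), Finset.sum_insert (by decide),
      Finset.sum_insert (by decide), Finset.sum_insert (by decide),
      Finset.sum_singleton]
  have hsum : ((univ.filter (· ∈ C)) : Finset (Fin 24 → ZMod 2)).card
      = ∑ w ∈ ({0, 8, 12, 16, 24} : Finset ℕ),
        ((univ.filter (· ∈ C)).filter fun x => golayWt x = w).card :=
    Finset.card_eq_sum_card_fiberwise
      (fun x hx => wt_mem hselfdual hdoublyeven hmin (Finset.mem_filter.1 hx).2)
  have hm2 : ∑ w ∈ ({0, 8, 12, 16, 24} : Finset ℕ),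
      ∑ x ∈ (univ.filter (· ∈ C)).filter (fun x => golayWt x = w), (golayWt x)^2
      = 614400 := by
    rw [Finset.sum_fiberwise_of_maps_to
      (fun x hx => wt_mem hselfdual hdoublyeven hmin (Finset.mem_filter.1 hx).2),
      M2 hselfdual hmin hCF]
  have hinner : ∀ w : ℕ,
      ∑ x ∈ (univ.filter (· ∈ C)).filter (fun x => golayWt x = w), (golayWt x)^2
      = w^2 * ((univ.filter (· ∈ C)).filter fun x => golayWt x = w).card := by
    intro w
    rw [Finset.sum_congr rfl (fun x hx => by rw [(Finset.mem_filter.1 hx).2]),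
      Finset.sum_const, smul_eq_mul, mul_comm]
  rw [Finset.sum_congr rfl (fun w _ => hinner w)] at hm2
  rw [hexp] at hm2
  rw [hexp] at hsum
  rw [hCF, h0, h24, h168] at hsum
  rw [h0, h24, h168] at hm2
  norm_num at hm2
  have hA8 : ((univ.filter (· ∈ C)).filter fun x => golayWt x = 8).card = 759 := by
    linarith
  have hA12 : ((univ.filter (· ∈ C)).filter fun x => golayWt x = 12).card = 2576 := by
    linarith
  refine ⟨?_, ?_, ?_, ?_, ?_, ?_, ?_⟩
  · rw [hnat 0]; exact h0
  · rw [hnat 8]; exact hA8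
  · rw [hnat 12]; exact hA12
  · rw [hnat 16, h168]; exact hA8
  · rw [hnat 24]; exact h24
  · intro x hx
    exact C.add_mem hx (ones_mem hselfdual hdoublyeven)
  · intro x hx h4
    by_cases h0x : x = 0
    · rw [h0x, wt0] at h4; exact absurd h4 (by norm_num)
    · have := hmin x hx h0x; omega
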